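/- Every directed acyclic graph D on n ≥ 1 vertices satisfies F(D) = n − 1. -/
import Mathlib


/-- The set of out-neighbors of `v` in the digraph with arc relation `A`. -/
def Nout {V : Type} (A : V → V → Prop) (v : V) : Set V := {w | A v w}

/-- The set of in-neighbors of `v`. -/
def Nin {V : Type} (A : V → V → Prop) (v : V) : Set V := {w | A w v}

/-- One application of the color change rule to the set `S` of filled vertices. -/
def Bstep {V : Type} (A : V → V → Prop) (S : Set V) : Set V :=
  S ∪ {w | ∃ v ∈ S, Nout A v \ S = {w}}

/-- `S` is a zero forcing set: iterating the color change rule fills all vertices. -/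
def IsZFS {V : Type} (A : V → V → Prop) (S : Set V) : Prop :=
  ∃ t, (Bstep A)^[t] S = Set.univ

/-- The failed zero forcing number: the maximum cardinality of a failed zero forcing set. -/
noncomputable def Fnum {V : Type} (A : V → V → Prop) : ℕ :=
  sSup {k | ∃ S : Set V, ¬ IsZFS A S ∧ S.ncard = k}

/-- The zero forcing number: the minimum cardinality of a zero forcing set. -/
noncomputable def Znum {V : Type} (A : V → V → Prop) : ℕ :=
  sInf {k | ∃ S : Set V, IsZFS A S ∧ S.ncard = k}

/-- `W` is a critical set: `W` is nonempty and no vertex outside `W` has exactly one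
out-neighbor in `W`. -/
def IsCritical {V : Type} (A : V → V → Prop) (W : Set V) : Prop :=
  W.Nonempty ∧ ∀ v ∈ Wᶜ, (Nout A v ∩ W).ncard ≠ 1

/-- `D` is a directed cycle: either a single vertex with no arcs, or the vertices can be
cyclically labeled so that the arcs are exactly the consecutive ones. -/
def IsDirectedCycle {V : Type} [Fintype V] (A : V → V → Prop) : Prop :=
  (Fintype.card V = 1 ∧ ∀ u v : V, ¬ A u v) ∨
  (2 ≤ Fintype.card V ∧ ∃ e : ZMod (Fintype.card V) ≃ V,
      ∀ i j : ZMod (Fintype.card V), A (e i) (e j) ↔ j = i + 1)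

theorem stmt_15 {V : Type} [Fintype V] [Nonempty V] (A : V → V → Prop)
    (hA : Irreflexive A) (hacyc : ∀ v : V, ¬ Relation.TransGen A v v) :
    Fnum A = Fintype.card V - 1 := by
  classical
  -- find a source: a vertex with no in-neighbors
  have hwf : WellFounded (Relation.TransGen A) := by
    have : IsIrrefl V (Relation.TransGen A) := ⟨hacyc⟩
    exact Finite.wellFounded_of_trans_of_irrefl _
  obtain ⟨v, -, hv⟩ := hwf.has_min Set.univ ⟨Classical.arbitrary V, trivial⟩
  have hsource : ∀ u : V, ¬ A u v := fun u hu =>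
    hv u trivial (Relation.TransGen.single hu)
  set S : Set V := {v}ᶜ with hS
  have hfix : Bstep A S = S := by
    apply Set.union_eq_self_of_subset_right
    rintro w ⟨u, hu, hw⟩
    by_contra hwS
    have hwv : w = v := by
      simpa [hS] using hwS
    have : w ∈ Nout A u \ S := hw ▸ rfl
    exact hsource u (hwv ▸ this.1)
  have hnot : ¬ IsZFS A S := by
    rintro ⟨t, ht⟩
    rw [Function.iterate_fixed hfix] at ht
    have : v ∈ S := ht ▸ trivial
    simp [hS] at this
  have hcard : S.ncard = Fintype.card V - 1 := by
    have : S.ncard + ({v} : Set V).ncard = Fintype.card V := by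
      rw [hS, add_comm, Set.ncard_add_ncard_compl,
        Nat.card_eq_fintype_card]
    simp at this
    omega
  have hmem : (Fintype.card V - 1) ∈ {k | ∃ S : Set V, ¬ IsZFS A S ∧ S.ncard = k} :=
    ⟨S, hnot, hcard⟩
  have hbound : ∀ k ∈ {k | ∃ S : Set V, ¬ IsZFS A S ∧ S.ncard = k},
      k ≤ Fintype.card V - 1 := by
    rintro k ⟨T, hT, rfl⟩
    have hTne : T ≠ Set.univ := fun h => hT ⟨0, h⟩
    have : T.ncard < (Set.univ : Set V).ncard := by
      apply Set.ncard_lt_ncard (Set.ssubset_univ_iff.mpr hTne) Set.finite_univ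
    rw [Set.ncard_univ, Nat.card_eq_fintype_card] at this
    omega
  apply le_antisymm
  · exact csSup_le ⟨_, hmem⟩ hbound
  · exact le_csSup ⟨_, hbound⟩ hmem
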